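/- Let G be an oligomorphic closed subgroup of S∞. Then there is an open subgroup W of G such that the left translation action of G on the set of left cosets of W is faithful and oligomorphic (for each n ≥ 1, the diagonal action of G on n-tuples of left cosets of W has only finitely many orbits); moreover, for any bijective enumeration of the left cosets of W by ℕ, the resulting homomorphism Θ : G → S∞ induced by this action is a topological group embedding, i.e. Θ is injective, continuous, and a homeomorphism onto its image. -/

import Mathlib

/-- `S∞`: the group of permutations of `ℕ` with the topology of pointwise convergence,
induced by `σ ↦ (σ, σ⁻¹)` from the product topology on `(ℕ → ℕ) × (ℕ → ℕ)`. -/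
instance permTop : TopologicalSpace (Equiv.Perm ℕ) :=
  TopologicalSpace.induced (fun σ => ((⇑σ, ⇑σ.symm) : (ℕ → ℕ) × (ℕ → ℕ))) inferInstance

namespace Stmt16Aux

open Equiv Topology

variable (G : Subgroup (Equiv.Perm ℕ)) (F : Finset ℕ)

/-- The pointwise stabilizer of `F` in `G`. -/
def Wo : Subgroup G where
  carrier := {g | ∀ a ∈ F, (g : Equiv.Perm ℕ) a = a}
  one_mem' := fun a _ => rfl
  mul_mem' := by
    intro g h hg hh a ha
    simp only [Set.mem_setOf_eq, Subgroup.coe_mul, Equiv.Perm.mul_apply] at *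
    rw [hh a ha, hg a ha]
  inv_mem' := by
    intro g hg a ha
    simp only [Set.mem_setOf_eq] at *
    have h1 := hg a ha
    rw [Subgroup.coe_inv]
    nth_rewrite 1 [← h1]
    exact Equiv.symm_apply_apply _ _

lemma mem_Wo {g : G} : g ∈ Wo G F ↔ ∀ a ∈ F, (g : Equiv.Perm ℕ) a = a := Iff.rfl

lemma mk_eq_mk {h h' : G} :
    (QuotientGroup.mk h : G ⧸ Wo G F) = QuotientGroup.mk h' ↔
      ∀ a ∈ F, (h : Equiv.Perm ℕ) a = (h' : Equiv.Perm ℕ) a := by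
  rw [QuotientGroup.eq]
  constructor
  · intro hw a ha
    have h1 := hw a ha
    simp only [Subgroup.coe_mul, Subgroup.coe_inv, Equiv.Perm.mul_apply] at h1
    have h2 := congrArg (⇑(h : Equiv.Perm ℕ)) h1
    rw [show ∀ (τ : Equiv.Perm ℕ) (y : ℕ), τ (τ⁻¹ y) = y from fun τ y => Equiv.apply_symm_apply τ y] at h2
    exact h2.symm
  · intro hv a ha
    show ((h⁻¹ * h' : G) : Equiv.Perm ℕ) a = a
    simp only [Subgroup.coe_mul, Subgroup.coe_inv, Equiv.Perm.mul_apply]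
    rw [← hv a ha]
    exact Equiv.symm_apply_apply _ _

lemma smul_mk (g h : G) :
    g • (QuotientGroup.mk h : G ⧸ Wo G F) = QuotientGroup.mk (g * h) := rfl

lemma out_apply (u : G) {a : ℕ} (ha : a ∈ F) :
    (((QuotientGroup.mk u : G ⧸ Wo G F).out : G) : Equiv.Perm ℕ) a = (u : Equiv.Perm ℕ) a :=
  (mk_eq_mk G F).mp (QuotientGroup.out_eq' _) a ha

variable {G F} in
lemma faithful (hF : ∀ x : ℕ, ∃ a ∈ F, ∃ σ ∈ G, σ x = a) :
    ∀ g : G, (∀ q : G ⧸ Wo G F, g • q = q) → g = 1 := by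
  intro g hg
  have hx : ∀ x : ℕ, (g : Equiv.Perm ℕ) x = x := by
    intro x
    obtain ⟨c, hc, σ, hσG, hσ⟩ := hF x
    set h : G := (⟨σ, hσG⟩ : G)⁻¹ with hh
    have h1 : (h : Equiv.Perm ℕ) c = x := by
      rw [hh, Subgroup.coe_inv, ← hσ]
      exact Equiv.symm_apply_apply _ _
    have h2 : (QuotientGroup.mk (g * h) : G ⧸ Wo G F) = QuotientGroup.mk h :=
      hg (QuotientGroup.mk h)
    have h3 := (mk_eq_mk G F).mp h2 c hc
    simp only [Subgroup.coe_mul, Equiv.Perm.mul_apply] at h3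
    rw [h1] at h3
    exact h3
  exact Subtype.ext (Equiv.ext hx)

/-- Encoding of a coset by its values on `F`. -/
noncomputable def enc (q : G ⧸ Wo G F) (a : {a // a ∈ F}) : ℕ := ((q.out : G) : Equiv.Perm ℕ) a

lemma enc_mk (u : G) (a : {a // a ∈ F}) :
    enc G F (QuotientGroup.mk u) a = (u : Equiv.Perm ℕ) a :=
  out_apply G F u a.2

lemma enc_inj : Function.Injective (enc G F) := by
  intro q q' hqq'
  rw [← QuotientGroup.out_eq' q, ← QuotientGroup.out_eq' q']
  refine (mk_eq_mk G F).mpr fun a ha => ?_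
  exact congrFun hqq' ⟨a, ha⟩

lemma enc_smul (g : G) (q : G ⧸ Wo G F) (a : {a // a ∈ F}) :
    enc G F (g • q) a = (g : Equiv.Perm ℕ) (enc G F q a) := by
  induction q using QuotientGroup.induction_on with
  | H z =>
    rw [smul_mk, enc_mk, enc_mk]
    simp [Equiv.Perm.mul_apply]

variable {G F} in
lemma olig (hF : ∀ x : ℕ, ∃ a ∈ F, ∃ σ ∈ G, σ x = a)
    (holig : ∀ n : ℕ, 1 ≤ n → ∃ T : Finset (Fin n → ℕ), ∀ x : Fin n → ℕ,
      ∃ y ∈ T, ∃ g ∈ G, ∀ i, g (x i) = y i) :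
    ∀ n : ℕ, 1 ≤ n → ∃ T : Finset (Fin n → G ⧸ Wo G F), ∀ f : Fin n → G ⧸ Wo G F,
      ∃ t ∈ T, ∃ g : G, ∀ i, g • f i = t i := by
  classical
  intro n hn
  haveI : Nonempty (Fin n) := ⟨⟨0, hn⟩⟩
  haveI : Nonempty {a // a ∈ F} := by
    obtain ⟨a, ha, -⟩ := hF 0
    exact ⟨⟨a, ha⟩⟩
  set κ := Fintype.card (Fin n × {a // a ∈ F}) with hκdef
  have hκ : 1 ≤ κ := Fintype.card_pos
  set E : Fin κ ≃ (Fin n × {a // a ∈ F}) := (Fintype.equivFin _).symm with hE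
  set pack : (Fin n → G ⧸ Wo G F) → (Fin κ → ℕ) :=
    fun f k => enc G F (f (E k).1) (E k).2 with hpackdef
  have hpackinj : Function.Injective pack := by
    intro f1 f2 h12
    funext i
    apply enc_inj G F
    funext a
    have := congrFun h12 (E.symm (i, a))
    simpa [hpackdef] using this
  obtain ⟨T, hT⟩ := holig κ hκ
  set dec : (Fin κ → ℕ) → (Fin n → G ⧸ Wo G F) := fun y =>
    if hy : ∃ f, pack f = y then hy.choose else fun _ => QuotientGroup.mk 1 with hdecdef
  refine ⟨T.image dec, fun f => ?_⟩
  obtain ⟨y, hyT, σ, hσG, hσ⟩ := hT (pack f)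
  set g : G := ⟨σ, hσG⟩ with hg
  have hpack : pack (fun i => g • f i) = y := by
    funext k
    show enc G F (g • f (E k).1) (E k).2 = y k
    rw [enc_smul]
    exact hσ k
  have hex : ∃ f', pack f' = y := ⟨fun i => g • f i, hpack⟩
  have hdec : dec y = fun i => g • f i := by
    have h1 : pack (dec y) = y := by
      rw [hdecdef]
      simp only [dif_pos hex]
      exact hex.choose_spec
    exact hpackinj (h1.trans hpack.symm)
  exact ⟨dec y, Finset.mem_image_of_mem _ hyT, g, fun i => by rw [hdec]⟩

/-! Topology lemmas -/

lemma isOpen_eval (x : ℕ) (S : Set ℕ) : IsOpen {σ : Equiv.Perm ℕ | σ x ∈ S} := by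
  have h1 : Continuous (fun σ : Equiv.Perm ℕ => ((⇑σ, ⇑σ.symm) : (ℕ → ℕ) × (ℕ → ℕ))) :=
    continuous_induced_dom
  have hc : Continuous (fun σ : Equiv.Perm ℕ => σ x) :=
    (continuous_apply x).comp (continuous_fst.comp h1)
  exact (isOpen_discrete S).preimage hc

lemma isOpen_val_eq (b c : ℕ) : IsOpen {g : G | (g : Equiv.Perm ℕ) b = c} := by
  have : {g : G | (g : Equiv.Perm ℕ) b = c}
      = Subtype.val ⁻¹' {σ : Equiv.Perm ℕ | σ b ∈ ({c} : Set ℕ)} := by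
    ext g; simp
  rw [this]
  exact (isOpen_eval b {c}).preimage continuous_subtype_val

lemma isOpen_Wo : IsOpen ((Wo G F : Subgroup G) : Set G) := by
  have : ((Wo G F : Subgroup G) : Set G) = ⋂ a ∈ F, {g : G | (g : Equiv.Perm ℕ) a = a} := by
    ext g
    simp only [Set.mem_iInter, Set.mem_setOf_eq, SetLike.mem_coe, mem_Wo]
  rw [this]
  exact isOpen_biInter_finset fun a _ => isOpen_val_eq G a a

lemma isOpen_smul_eq (q q' : G ⧸ Wo G F) : IsOpen {g : G | g • q = q'} := by
  have hq : (QuotientGroup.mk q.out : G ⧸ Wo G F) = q := QuotientGroup.out_eq' q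
  have hq' : (QuotientGroup.mk q'.out : G ⧸ Wo G F) = q' := QuotientGroup.out_eq' q'
  have hset : {g : G | g • q = q'} = ⋂ a ∈ F,
      {g : G | (g : Equiv.Perm ℕ) (((q.out : G) : Equiv.Perm ℕ) a)
        = ((q'.out : G) : Equiv.Perm ℕ) a} := by
    ext g
    simp only [Set.mem_iInter, Set.mem_setOf_eq]
    rw [← hq, ← hq', smul_mk, mk_eq_mk]
    constructor
    · intro h a ha
      have := h a ha
      simpa [Equiv.Perm.mul_apply] using this
    · intro h a ha
      simpa [Equiv.Perm.mul_apply] using h a ha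
  rw [hset]
  exact isOpen_biInter_finset fun a _ => isOpen_val_eq G _ _

lemma subtype_top_eq :
    (instTopologicalSpaceSubtype : TopologicalSpace G) =
      TopologicalSpace.induced
        (fun g : G => ((⇑(g : Equiv.Perm ℕ), ⇑(g : Equiv.Perm ℕ).symm) : (ℕ → ℕ) × (ℕ → ℕ)))
        inferInstance := by
  show TopologicalSpace.induced (Subtype.val : G → Equiv.Perm ℕ) permTop = _
  rw [show permTop = TopologicalSpace.induced
      (fun σ : Equiv.Perm ℕ => ((⇑σ, ⇑σ.symm) : (ℕ → ℕ) × (ℕ → ℕ))) inferInstance from rfl,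
    induced_compose]
  rfl

lemma le_subtype_top (t' : TopologicalSpace G)
    (h1 : ∀ b c : ℕ, IsOpen[t'] {g : G | (g : Equiv.Perm ℕ) b = c}) :
    t' ≤ (instTopologicalSpaceSubtype : TopologicalSpace G) := by
  have h2 : ∀ b c : ℕ, IsOpen[t'] {g : G | (g : Equiv.Perm ℕ).symm b = c} := by
    intro b c
    have : {g : G | (g : Equiv.Perm ℕ).symm b = c} = {g : G | (g : Equiv.Perm ℕ) c = b} := by
      ext g
      simp only [Set.mem_setOf_eq]
      rw [Equiv.symm_apply_eq, eq_comm]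
    rw [this]
    exact h1 c b
  rw [subtype_top_eq]
  letI := t'
  refine continuous_iff_le_induced.mp ?_
  refine continuous_prodMk.mpr ⟨?_, ?_⟩
  · apply continuous_pi
    intro b
    rw [continuous_discrete_rng]
    intro c
    exact h1 b c
  · apply continuous_pi
    intro b
    rw [continuous_discrete_rng]
    intro c
    exact h2 b c

end Stmt16Aux

open Stmt16Aux

/-- an oligomorphic closed subgroup `G ≤ S∞` has an open subgroup `W` such
that the left translation action of `G` on `G ⧸ W` is faithful and oligomorphic, and any
bijective enumeration of `G ⧸ W` by `ℕ` turns this action into a topological embedding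
`G → S∞`. -/
theorem stmt16 (G : Subgroup (Equiv.Perm ℕ)) (hclosed : IsClosed (G : Set (Equiv.Perm ℕ)))
    (holig : ∀ n : ℕ, 1 ≤ n → ∃ T : Finset (Fin n → ℕ), ∀ x : Fin n → ℕ,
      ∃ y ∈ T, ∃ g ∈ G, ∀ i, g (x i) = y i) :
    ∃ W : Subgroup G, IsOpen (W : Set G) ∧
      (∀ g : G, (∀ q : G ⧸ W, g • q = q) → g = 1) ∧
      (∀ n : ℕ, 1 ≤ n → ∃ T : Finset (Fin n → G ⧸ W), ∀ f : Fin n → G ⧸ W,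
        ∃ t ∈ T, ∃ g : G, ∀ i, g • f i = t i) ∧
      (∀ e : G ⧸ W ≃ ℕ,
        Function.Injective (fun g : G => (e.symm.trans (MulAction.toPerm g)).trans e) ∧
        Continuous (fun g : G => (e.symm.trans (MulAction.toPerm g)).trans e) ∧
        Topology.IsEmbedding (fun g : G => (e.symm.trans (MulAction.toPerm g)).trans e)) := by
  classical
  -- orbit representatives
  obtain ⟨T1, hT1⟩ := holig 1 le_rfl
  set F : Finset ℕ := T1.image (fun y => y 0) with hFdef
  have hF : ∀ x : ℕ, ∃ a ∈ F, ∃ σ ∈ G, σ x = a := by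
    intro x
    obtain ⟨y, hyT, σ, hσG, hσ⟩ := hT1 (fun _ => x)
    exact ⟨y 0, Finset.mem_image_of_mem _ hyT, σ, hσG, hσ 0⟩
  refine ⟨Wo G F, isOpen_Wo G F, faithful hF, olig hF holig, ?_⟩
  intro e
  set Θ : G → Equiv.Perm ℕ := fun g => (e.symm.trans (MulAction.toPerm g)).trans e with hΘdef
  have hΘapp : ∀ (g : G) (x : ℕ), Θ g x = e (g • e.symm x) := fun g x => rfl
  -- injectivity
  have hinj : Function.Injective Θ := by
    intro g g' hgg'
    have hq : ∀ q : G ⧸ Wo G F, g • q = g' • q := by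
      intro q
      have h1 : Θ g (e q) = Θ g' (e q) := by rw [hgg']
      rw [hΘapp, hΘapp, Equiv.symm_apply_apply] at h1
      exact e.injective h1
    have h2 : ∀ q : G ⧸ Wo G F, (g'⁻¹ * g) • q = q := by
      intro q
      rw [mul_smul, hq, inv_smul_smul]
    have h3 := faithful hF _ h2
    have h4 : g' = g := inv_mul_eq_one.mp h3
    exact h4.symm
  -- continuity
  have hΘsymm : ∀ (g : G) (x : ℕ), (Θ g).symm x = e (g⁻¹ • e.symm x) := by
    intro g x
    rw [Equiv.symm_apply_eq, hΘapp, Equiv.symm_apply_apply, smul_inv_smul,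
      Equiv.apply_symm_apply]
  have hcont : Continuous Θ := by
    refine continuous_induced_rng.mpr ?_
    refine continuous_prodMk.mpr ⟨?_, ?_⟩
    · apply continuous_pi
      intro x
      rw [continuous_discrete_rng]
      intro y
      have : (fun g : G => Θ g x) ⁻¹' {y} = {g : G | g • e.symm x = e.symm y} := by
        ext g
        simp only [Set.mem_preimage, Set.mem_singleton_iff, Set.mem_setOf_eq, hΘapp,
          ← Equiv.eq_symm_apply (e := e)]
      rw [this]
      exact isOpen_smul_eq G F _ _
    · apply continuous_pi
      intro x
      rw [continuous_discrete_rng]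
      intro y
      have : (fun g : G => (Θ g).symm x) ⁻¹' {y} = {g : G | g • e.symm y = e.symm x} := by
        ext g
        simp only [Set.mem_preimage, Set.mem_singleton_iff, Set.mem_setOf_eq, hΘsymm]
        rw [← Equiv.eq_symm_apply (e := e), inv_smul_eq_iff, eq_comm]
      rw [this]
      exact isOpen_smul_eq G F _ _
  refine ⟨hinj, hcont, ?_⟩
  -- embedding
  refine ⟨⟨?_⟩, hinj⟩
  refine le_antisymm (continuous_iff_le_induced.mp hcont) ?_
  apply le_subtype_top
  intro b c
  -- find h ∈ G with h c₀ = b, c₀ ∈ F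
  obtain ⟨c₀, hc₀F, σ, hσG, hσ⟩ := hF b
  set h : G := (⟨σ, hσG⟩ : G)⁻¹ with hhdef
  have hhc : (h : Equiv.Perm ℕ) c₀ = b := by
    rw [hhdef, Subgroup.coe_inv, ← hσ]
    exact Equiv.symm_apply_apply _ _
  set S : Set ℕ := {x | (((e.symm x).out : G) : Equiv.Perm ℕ) c₀ = c} with hSdef
  set V : Set (Equiv.Perm ℕ) := {τ | τ (e (QuotientGroup.mk h)) ∈ S} with hVdef
  have hVopen : IsOpen V := isOpen_eval _ S
  have hpre : Θ ⁻¹' V = {g : G | (g : Equiv.Perm ℕ) b = c} := by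
    ext g
    simp only [Set.mem_preimage, hVdef, Set.mem_setOf_eq, hΘapp, Equiv.symm_apply_apply,
      hSdef, smul_mk]
    rw [out_apply G F _ hc₀F]
    simp only [Subgroup.coe_mul, Equiv.Perm.mul_apply, hhc]
  rw [isOpen_induced_iff]
  exact ⟨V, hVopen, hpre⟩
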